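/- Let π be a continuous piecewise linear minimal valid function, and let π̄ : ℝ → ℝ be a continuous piecewise linear function, not identically zero, such that both π + π̄ and π − π̄ are minimal valid functions. Then there exists a minimal valid function π' with E(π) ⊊ E(π') (strict inclusion); consequently, π is not a weak facet. -/

import Mathlib

/-- A finite-support function `y : ℝ → ℕ` is feasible if `∑ r, r·y(r) − f ∈ ℤ`. -/
def Feasible (f : ℝ) (y : ℝ →₀ ℕ) : Prop :=
  ∃ z : ℤ, (∑ r ∈ y.support, r * (y r : ℝ)) - f = (z : ℝ)

/-- `π` is a valid function: nonnegative, and `∑ r, π(r)·y(r) ≥ 1` for every feasible `y`. -/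
def Valid (f : ℝ) (π : ℝ → ℝ) : Prop :=
  (∀ x, 0 ≤ π x) ∧
    ∀ y : ℝ →₀ ℕ, Feasible f y → 1 ≤ ∑ r ∈ y.support, π r * (y r : ℝ)

/-- A valid function is minimal if no other valid function is pointwise ≤ it. -/
def MinimalValid (f : ℝ) (π : ℝ → ℝ) : Prop :=
  Valid f π ∧ ¬ ∃ π' : ℝ → ℝ, Valid f π' ∧ (∀ x, π' x ≤ π x) ∧ π' ≠ π

/-- `P(π)`: the set of feasible `y` with `∑ r, π(r)·y(r) = 1`. -/
def Pset (f : ℝ) (π : ℝ → ℝ) : Set (ℝ →₀ ℕ) :=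
  {y | Feasible f y ∧ ∑ r ∈ y.support, π r * (y r : ℝ) = 1}

/-- `E(π) = {(x,y) : π(x) + π(y) = π(x+y)}`. -/
def Eset (π : ℝ → ℝ) : Set (ℝ × ℝ) :=
  {p | π p.1 + π p.2 = π (p.1 + p.2)}

/-- A valid function `π` is a facet if every valid `π'` with `P(π) ⊆ P(π')` equals `π`. -/
def IsFacet (f : ℝ) (π : ℝ → ℝ) : Prop :=
  Valid f π ∧ ∀ π' : ℝ → ℝ, Valid f π' → Pset f π ⊆ Pset f π' → π' = π

/-- A valid function `π` is a weak facet if every valid `π'` with `P(π) ⊆ P(π')`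
has `P(π) = P(π')`. -/
def IsWeakFacet (f : ℝ) (π : ℝ → ℝ) : Prop :=
  Valid f π ∧ ∀ π' : ℝ → ℝ, Valid f π' → Pset f π ⊆ Pset f π' → Pset f π = Pset f π'

/-- A valid function `π` is extreme if whenever `π = (π¹ + π²)/2` with `π¹, π²` valid,
then `π¹ = π² = π`. -/
def ExtremeFunc (f : ℝ) (π : ℝ → ℝ) : Prop :=
  Valid f π ∧ ∀ π₁ π₂ : ℝ → ℝ, Valid f π₁ → Valid f π₂ →
    (∀ x, π x = (π₁ x + π₂ x) / 2) → π₁ = π ∧ π₂ = π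

/-- `π` is piecewise linear: there is a closed, discrete set `B ⊆ ℝ` of breakpoints
such that `π` is affine on each connected component of `ℝ \ B`. -/
def PiecewiseLinear (π : ℝ → ℝ) : Prop :=
  ∃ B : Set ℝ, IsClosed B ∧
    (∀ x ∈ B, ∃ ε > (0 : ℝ), ∀ y ∈ B, |y - x| < ε → y = x) ∧
    (∀ x ∉ B, ∃ a b : ℝ, ∀ z ∈ connectedComponentIn Bᶜ x, π z = a * z + b)

/-- `π` is continuous piecewise linear. -/
def ContPiecewiseLinear (π : ℝ → ℝ) : Prop :=
  PiecewiseLinear π ∧ Continuous π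

noncomputable def SM (g : ℝ → ℝ) (y : ℝ →₀ ℕ) : ℝ := ∑ r ∈ y.support, g r * (y r : ℝ)

lemma SM_def (g : ℝ → ℝ) (y : ℝ →₀ ℕ) : SM g y = y.sum (fun r n => g r * (n : ℝ)) := rfl

lemma SM_add (g : ℝ → ℝ) (y₁ y₂ : ℝ →₀ ℕ) : SM g (y₁ + y₂) = SM g y₁ + SM g y₂ := by
  simp only [SM_def]
  apply Finsupp.sum_add_index' (fun a => by simp) (fun a m n => by push_cast; ring)

lemma SM_single (g : ℝ → ℝ) (a : ℝ) (n : ℕ) : SM g (Finsupp.single a n) = g a * n := by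
  simp only [SM_def]
  exact Finsupp.sum_single_index (by simp)

lemma SM_single' (a : ℝ) (n : ℕ) : SM (fun r => r) (Finsupp.single a n) = a * n := by
  rw [SM_single]

lemma SM_erase (g : ℝ → ℝ) (y : ℝ →₀ ℕ) (a : ℝ) :
    SM g (y.erase a) = SM g y - g a * (y a : ℝ) := by
  have h := SM_add g (Finsupp.single a (y a)) (y.erase a)
  rw [Finsupp.single_add_erase] at h
  rw [h, SM_single]; ring

lemma SM_erase' (y : ℝ →₀ ℕ) (a : ℝ) :
    SM (fun r => r) (y.erase a) = SM (fun r => r) y - a * (y a : ℝ) := by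
  rw [SM_erase]

lemma SM_nonneg (g : ℝ → ℝ) (hg : ∀ x, 0 ≤ g x) (y : ℝ →₀ ℕ) : 0 ≤ SM g y :=
  Finset.sum_nonneg fun r _ => mul_nonneg (hg r) (by positivity)

lemma SM_update (g : ℝ → ℝ) (y : ℝ →₀ ℕ) (c t : ℝ) :
    SM (Function.update g c t) y = SM g y + (t - g c) * (y c : ℝ) := by
  have hfun : (fun r => Function.update g c t r * (y r : ℝ))
      = Function.update (fun r => g r * (y r : ℝ)) c (t * (y c : ℝ)) := by
    funext r
    by_cases hr : r = c
    · subst hr; simp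
    · simp [Function.update_of_ne hr]
  by_cases hc : c ∈ y.support
  · have h1 : SM (Function.update g c t) y
        = t * y c + ∑ r ∈ y.support.erase c, g r * (y r : ℝ) := by
      unfold SM
      rw [hfun, Finset.sum_update_of_mem hc, Finset.erase_eq]
    have h2 : SM g y = g c * (y c : ℝ) + ∑ r ∈ y.support.erase c, g r * (y r : ℝ) :=
      (Finset.add_sum_erase _ _ hc).symm
    rw [h1, h2]; ring
  · have hy : (y c : ℝ) = 0 := by
      simp [Finsupp.notMem_support_iff.mp hc]
    rw [hy]
    unfold SM
    rw [Finset.sum_congr rfl (fun r hr => by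
      rw [Function.update_of_ne (by rintro rfl; exact hc hr)])]
    ring

lemma Feas_iff (f : ℝ) (y : ℝ →₀ ℕ) : Feasible f y ↔ ∃ z : ℤ, SM (fun r => r) y - f = (z:ℝ) :=
  Iff.rfl

lemma Valid_iff (f : ℝ) (g : ℝ → ℝ) :
    Valid f g ↔ (∀ x, 0 ≤ g x) ∧ ∀ y : ℝ →₀ ℕ, Feasible f y → 1 ≤ SM g y := Iff.rfl

lemma collapse (g : ℝ → ℝ) (h0 : g 0 = 0) (hsub : ∀ x y, g (x+y) ≤ g x + g y)
    (s : Finset ℝ) (c : ℝ → ℕ) (x : ℝ → ℝ) :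
    g (∑ a ∈ s, (c a : ℝ) * x a) ≤ ∑ a ∈ s, (c a : ℝ) * g (x a) := by
  have key : ∀ (n : ℕ) (u t : ℝ), g ((n:ℝ) * u + t) ≤ (n:ℝ) * g u + g t := by
    intro n
    induction n with
    | zero => intro u t; simp
    | succ n ih =>
      intro u t
      have h1 : ((n+1:ℕ):ℝ) * u + t = u + ((n:ℝ) * u + t) := by push_cast; ring
      have h2 := hsub u ((n:ℝ) * u + t)
      have h3 := ih u t
      rw [h1]
      push_cast
      nlinarith
  induction s using Finset.induction with
  | empty => simp [h0]
  | @insert a s ha ih =>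
    rw [Finset.sum_insert ha, Finset.sum_insert ha]
    calc g ((c a : ℝ) * x a + ∑ b ∈ s, (c b : ℝ) * x b)
        ≤ (c a : ℝ) * g (x a) + g (∑ b ∈ s, (c b : ℝ) * x b) := key (c a) (x a) _
      _ ≤ (c a : ℝ) * g (x a) + ∑ b ∈ s, (c b : ℝ) * g (x b) := by linarith

section MinFacts
variable {f : ℝ} {π : ℝ → ℝ}

lemma piSMge (hm : MinimalValid f π) {y : ℝ →₀ ℕ} (hy : Feasible f y) : 1 ≤ SM π y :=
  hm.1.2 y hy

lemma piZero (hm : MinimalValid f π) : π 0 = 0 := by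
  by_contra h
  have hpos : 0 < π 0 := lt_of_le_of_ne (hm.1.1 0) (Ne.symm h)
  apply hm.2
  refine ⟨Function.update π 0 0, ⟨?_, ?_⟩, ?_, ?_⟩
  · intro x
    by_cases hx : x = 0
    · subst hx; simp
    · rw [Function.update_of_ne hx]; exact hm.1.1 x
  · intro y hy
    obtain ⟨z, hz⟩ := hy
    have hzS : SM (fun r => r) y - f = (z:ℝ) := hz
    have hy' : Feasible f (y.erase 0) := by
      rw [Feas_iff]
      refine ⟨z, ?_⟩
      rw [SM_erase']
      rw [show SM (fun r => r) y - 0 * (y 0 : ℝ) - f = SM (fun r => r) y - f by ring, hzS]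
    have h1 := piSMge hm hy'
    rw [SM_erase] at h1
    have h2 := SM_update π y 0 0
    show 1 ≤ SM (Function.update π 0 0) y
    rw [h2]; linarith
  · intro x
    by_cases hx : x = 0
    · subst hx; simp; exact hm.1.1 0
    · rw [Function.update_of_ne hx]
  · intro hcon
    have := congrFun hcon 0
    rw [Function.update_self] at this
    exact h this.symm

lemma piLeOne (hm : MinimalValid f π) : ∀ x, π x ≤ 1 := by
  intro c
  by_contra h
  push_neg at h
  apply hm.2
  refine ⟨Function.update π c 1, ⟨?_, ?_⟩, ?_, ?_⟩
  · intro x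
    by_cases hx : x = c
    · subst hx; simp
    · rw [Function.update_of_ne hx]; exact hm.1.1 x
  · intro y hy
    by_cases hc : y c = 0
    · have := SM_update π y c 1
      show 1 ≤ SM (Function.update π c 1) y
      rw [this, hc]
      simpa using piSMge hm hy
    · have hcs : c ∈ y.support := Finsupp.mem_support_iff.mpr hc
      show 1 ≤ SM (Function.update π c 1) y
      have hterm : (1:ℝ) ≤ Function.update π c 1 c * (y c : ℝ) := by
        rw [Function.update_self, one_mul]
        exact_mod_cast Nat.one_le_iff_ne_zero.mpr hc
      unfold SM
      refine le_trans hterm (Finset.single_le_sum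
        (f := fun r => Function.update π c 1 r * (y r : ℝ)) (fun r _ => ?_) hcs)
      by_cases hr : r = c
      · subst hr; rw [Function.update_self]; positivity
      · rw [Function.update_of_ne hr]
        exact mul_nonneg (hm.1.1 r) (by positivity)
  · intro x
    by_cases hx : x = c
    · subst hx; simp; linarith
    · rw [Function.update_of_ne hx]
  · intro hcon
    have := congrFun hcon c
    rw [Function.update_self] at this
    linarith [this]

lemma piShift (hm : MinimalValid f π) : ∀ (x : ℝ) (n : ℤ), π (x + n) = π x := by
  have key : ∀ (u v : ℝ) (n : ℤ), u = v + n → ¬ (π v < π u) := by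
    intro u v n huv hlt
    apply hm.2
    refine ⟨Function.update π u (π v), ⟨?_, ?_⟩, ?_, ?_⟩
    · intro x
      by_cases hx : x = u
      · subst hx; rw [Function.update_self]; exact hm.1.1 v
      · rw [Function.update_of_ne hx]; exact hm.1.1 x
    · intro y hy
      obtain ⟨z, hz⟩ := hy
      have hzS : SM (fun r => r) y - f = (z:ℝ) := hz
      set y' := y.erase u + Finsupp.single v (y u) with hy'def
      have hid : SM (fun r => r) y' = SM (fun r => r) y - (n : ℝ) * (y u : ℝ) := by
        rw [hy'def, SM_add, SM_erase', SM_single']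
        rw [huv]; ring
      have hy' : Feasible f y' := by
        rw [Feas_iff]
        refine ⟨z - n * (y u : ℤ), ?_⟩
        rw [hid]
        rw [show SM (fun r => r) y - ↑n * ↑(y u) - f
            = (SM (fun r => r) y - f) - ↑n * ↑(y u) by ring, hzS]
        push_cast; ring
      have h1 := piSMge hm hy'
      rw [hy'def, SM_add, SM_erase, SM_single] at h1
      have h2 := SM_update π y u (π v)
      show 1 ≤ SM (Function.update π u (π v)) y
      rw [h2]; linarith
    · intro x
      by_cases hx : x = u
      · subst hx; rw [Function.update_self]; linarith
      · rw [Function.update_of_ne hx]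
    · intro hcon
      have := congrFun hcon u
      rw [Function.update_self] at this
      linarith [this]
  intro x n
  have h1 := key (x + n) x n rfl
  have h2 := key x (x + n) (-n) (by push_cast; ring)
  push_neg at h1 h2
  linarith

lemma piSubadd (hm : MinimalValid f π) : ∀ a b, π (a + b) ≤ π a + π b := by
  intro a b
  by_contra h
  push_neg at h
  have hb : b ≠ 0 := by
    rintro rfl
    rw [piZero hm, add_zero, add_zero] at h
    exact lt_irrefl _ h
  have ha : a ≠ 0 := by
    rintro rfl
    rw [piZero hm, zero_add, zero_add] at h
    exact lt_irrefl _ h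
  have hca : a + b ≠ a := by simpa using hb
  have hcb : a + b ≠ b := by simpa using ha
  apply hm.2
  refine ⟨Function.update π (a+b) (π a + π b), ⟨?_, ?_⟩, ?_, ?_⟩
  · intro x
    by_cases hx : x = a + b
    · subst hx; rw [Function.update_self]; exact add_nonneg (hm.1.1 a) (hm.1.1 b)
    · rw [Function.update_of_ne hx]; exact hm.1.1 x
  · intro y hy
    obtain ⟨z, hz⟩ := hy
    have hzS : SM (fun r => r) y - f = (z:ℝ) := hz
    set k := y (a+b) with hk
    set y' := y.erase (a+b) + (Finsupp.single a k + Finsupp.single b k) with hy'def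
    have hid : SM (fun r => r) y' = SM (fun r => r) y := by
      rw [hy'def, SM_add, SM_add, SM_erase', SM_single', SM_single']
      ring
    have hy' : Feasible f y' := by
      rw [Feas_iff]; exact ⟨z, by rw [hid]; exact hzS⟩
    have h1 := piSMge hm hy'
    rw [hy'def, SM_add, SM_add, SM_erase, SM_single, SM_single] at h1
    have h2 := SM_update π y (a+b) (π a + π b)
    show 1 ≤ SM (Function.update π (a+b) (π a + π b)) y
    rw [h2]; linarith
  · intro x
    by_cases hx : x = a + b
    · subst hx; rw [Function.update_self]; linarith
    · rw [Function.update_of_ne hx]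
  · intro hcon
    have := congrFun hcon (a+b)
    rw [Function.update_self] at this
    linarith [this]

lemma piPair (hm : MinimalValid f π) (x : ℝ) : 1 ≤ π x + π (f - x) := by
  have hy : Feasible f (Finsupp.single x 1 + Finsupp.single (f - x) 1) := by
    rw [Feas_iff]
    refine ⟨0, ?_⟩
    rw [SM_add, SM_single', SM_single']
    push_cast; ring
  have := piSMge hm hy
  rw [SM_add, SM_single, SM_single] at this
  push_cast at this
  linarith

lemma piF (hm : MinimalValid f π) : π f = 1 := by
  have h1 := piPair hm 0
  rw [piZero hm, sub_zero] at h1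
  have h2 := piLeOne hm f
  linarith

lemma piNsmul (hm : MinimalValid f π) : ∀ (n : ℕ) (z : ℝ), π ((n:ℝ) * z) ≤ (n:ℝ) * π z := by
  intro n z
  induction n with
  | zero => simp [piZero hm]
  | succ n ih =>
    have h1 : ((n+1:ℕ):ℝ) * z = z + (n:ℝ) * z := by push_cast; ring
    have h2 := piSubadd hm z ((n:ℝ)*z)
    rw [h1]
    push_cast
    nlinarith

end MinFacts

section SymSec
variable {f : ℝ} {π : ℝ → ℝ}

lemma piKey (hm : MinimalValid f π) (z w : ℝ) (hw0 : 0 ≤ w) (hwlt : w < π z)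
    (hK : ∀ K : ℕ, 1 ≤ K → 1 - π (f - (K:ℝ) * z) ≤ (K:ℝ) * w) : False := by
  set π' : ℝ → ℝ := fun x => ⨅ k : ℕ, (π (x - (k:ℝ) * z) + (k:ℝ) * w) with hπ'
  have hterm_nn : ∀ x (k : ℕ), 0 ≤ π (x - (k:ℝ)*z) + (k:ℝ)*w := by
    intro x k
    have := hm.1.1 (x - (k:ℝ)*z)
    positivity
  have hbdd : ∀ x, BddBelow (Set.range fun k : ℕ => π (x - (k:ℝ)*z) + (k:ℝ)*w) := by
    intro x
    exact ⟨0, by rintro t ⟨k, rfl⟩; exact hterm_nn x k⟩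
  have hle : ∀ x, π' x ≤ π x := by
    intro x
    have := ciInf_le (hbdd x) 0
    simpa using this
  have hz' : π' z ≤ w := by
    have h := ciInf_le (hbdd z) 1
    simp only [Nat.cast_one, one_mul, sub_self, piZero hm, zero_add] at h
    exact h
  have hnn : ∀ x, 0 ≤ π' x := fun x => le_ciInf (hterm_nn x)
  have hKall : ∀ K : ℕ, 1 - π (f - (K:ℝ) * z) ≤ (K:ℝ) * w := by
    intro K
    rcases Nat.eq_zero_or_pos K with h0 | h1
    · subst h0
      simp [piF hm]
    · exact hK K h1
  have hvalid : Valid f π' := by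
    rw [Valid_iff]
    refine ⟨hnn, ?_⟩
    intro y hy
    obtain ⟨m, hmz⟩ := hy
    have hmzS : SM (fun r => r) y - f = (m:ℝ) := hmz
    by_contra hcon
    push_neg at hcon
    set N : ℕ := ∑ r ∈ y.support, y r with hN
    set ε : ℝ := (1 - SM π' y) / (N + 1) with hε
    have hεpos : 0 < ε := by
      apply div_pos (by linarith) (by positivity)
    have hex : ∀ r ∈ y.support, ∃ k : ℕ, π (r - (k:ℝ)*z) + (k:ℝ)*w < π' r + ε := by
      intro r _
      apply exists_lt_of_ciInf_lt
      show π' r < π' r + ε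
      linarith
    choose! K hKspec using hex
    set Kt : ℝ := ∑ r ∈ y.support, (y r : ℝ) * (K r : ℝ) with hKt
    have hKtnat : Kt = ((∑ r ∈ y.support, y r * K r : ℕ) : ℝ) := by
      rw [hKt]; push_cast; ring_nf
    have hcoll : π (∑ r ∈ y.support, (y r : ℝ) * (r - (K r : ℝ) * z))
        ≤ ∑ r ∈ y.support, (y r : ℝ) * π (r - (K r : ℝ) * z) :=
      collapse π (piZero hm) (piSubadd hm) y.support y _
    have hTsum : ∑ r ∈ y.support, (y r : ℝ) * (r - (K r : ℝ) * z)
        = (f - Kt * z) + (m : ℝ) := by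
      have : ∑ r ∈ y.support, (y r : ℝ) * (r - (K r : ℝ) * z)
          = SM (fun r => r) y - Kt * z := by
        rw [SM_def, Finsupp.sum, hKt, Finset.sum_mul, ← Finset.sum_sub_distrib]
        apply Finset.sum_congr rfl
        intro r _
        ring
      rw [this]
      have : SM (fun r => r) y = f + (m:ℝ) := by linarith
      rw [this]; ring
    have hshift : π ((f - Kt * z) + (m : ℝ)) = π (f - Kt * z) := piShift hm _ m
    have hflow : 1 - Kt * w ≤ π (f - Kt * z) := by
      rw [hKtnat]
      have := hKall (∑ r ∈ y.support, y r * K r)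
      linarith
    have hsum1 : ∑ r ∈ y.support, (π (r - (K r : ℝ)*z) + (K r : ℝ)*w - ε) * (y r : ℝ)
        ≤ SM π' y := by
      unfold SM
      apply Finset.sum_le_sum
      intro r hr
      have h1 := hKspec r hr
      have h2 : (0:ℝ) ≤ (y r : ℝ) := by positivity
      nlinarith [h1, h2]
    have hsplit : ∑ r ∈ y.support, (π (r - (K r : ℝ)*z) + (K r : ℝ)*w - ε) * (y r : ℝ)
        = (∑ r ∈ y.support, (y r : ℝ) * π (r - (K r : ℝ) * z)) + Kt * w - ε * (N : ℝ) := by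
      rw [Finset.sum_congr rfl (fun r _ => by ring :
            ∀ r ∈ y.support, (π (r - (K r : ℝ)*z) + (K r : ℝ)*w - ε) * (y r : ℝ)
            = (y r : ℝ) * π (r - (K r : ℝ) * z) + ((y r : ℝ) * (K r:ℝ)) * w - ε * (y r : ℝ))]
      rw [Finset.sum_sub_distrib, Finset.sum_add_distrib, ← Finset.sum_mul, ← Finset.mul_sum]
      rw [hKt, hN]
      push_cast
      ring
    have hNε : ε * (N:ℝ) < 1 - SM π' y := by
      rw [hε]
      rw [div_mul_eq_mul_div]
      rw [div_lt_iff₀ (by positivity)]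
      have hN0 : (0:ℝ) ≤ (N:ℝ) := by positivity
      nlinarith
    rw [hTsum, hshift] at hcoll
    linarith [hsum1, hsplit, hcoll, hflow, hNε]
  exact hm.2 ⟨π', hvalid, hle, fun hcon => by
    have := congrFun hcon z
    rw [this] at hz'
    linarith⟩

lemma piSymLe (hm : MinimalValid f π) : ∀ x, π x + π (f - x) ≤ 1 := by
  intro z
  by_contra hcon
  push_neg at hcon
  have hπz : 0 < π z := by
    rcases lt_or_eq_of_le (hm.1.1 z) with h | h
    · exact h
    · exfalso
      have := piLeOne hm (f - z)
      rw [← h] at hcon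
      linarith
  have upper : ∀ K : ℕ, 1 ≤ K → 1 - π (f - (K:ℝ) * z) ≤ (K:ℝ) * π z := by
    intro K _
    have h1 := piPair hm ((K:ℝ) * z)
    have h2 := piNsmul hm K z
    linarith
  set M : ℕ := Nat.ceil (1 / π z) with hM
  have hM1 : 1 ≤ M := by
    rw [hM]
    exact Nat.one_le_iff_ne_zero.mpr (by
      intro h0
      have := Nat.ceil_eq_zero.mp h0
      have : (0:ℝ) < 1 / π z := by positivity
      linarith [Nat.ceil_eq_zero.mp h0, this])
  have hMge : 1 / π z ≤ (M:ℝ) := Nat.le_ceil _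
  have hMinv : 1 / ((M:ℝ) + 1) < π z := by
    rw [div_lt_iff₀ (by positivity)]
    have h1 : 1 / π z < (M:ℝ) + 1 := by linarith
    calc (1:ℝ) = π z * (1 / π z) := by field_simp
      _ < π z * ((M:ℝ)+1) := by
          apply mul_lt_mul_of_pos_left h1 hπz
  have hEx : ∃ K : ℕ, 1 ≤ K ∧ 1 - π (f - (K:ℝ) * z) = (K:ℝ) * π z := by
    by_contra hno
    push_neg at hno
    have hstrict : ∀ K : ℕ, 1 ≤ K → 1 - π (f - (K:ℝ) * z) < (K:ℝ) * π z := by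
      intro K hK1
      exact lt_of_le_of_ne (upper K hK1) (hno K hK1)
    have hne : (Finset.Icc 1 M).Nonempty := ⟨1, Finset.mem_Icc.mpr ⟨le_refl 1, hM1⟩⟩
    set w : ℝ := max (1 / ((M:ℝ)+1))
        ((Finset.Icc 1 M).sup' hne (fun K => (1 - π (f - (K:ℝ) * z)) / (K:ℝ))) with hw
    have hw0 : 0 ≤ w := le_trans (by positivity) (le_max_left _ _)
    have hwlt : w < π z := by
      rw [hw]
      apply max_lt hMinv
      rw [Finset.sup'_lt_iff]
      intro K hKmem
      obtain ⟨hK1, _⟩ := Finset.mem_Icc.mp hKmem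
      have hKpos : (0:ℝ) < (K:ℝ) := by exact_mod_cast hK1
      rw [div_lt_iff₀ hKpos]
      have := hstrict K hK1
      linarith [mul_comm (π z) (K:ℝ) ▸ this]
    have hKbd : ∀ K : ℕ, 1 ≤ K → 1 - π (f - (K:ℝ) * z) ≤ (K:ℝ) * w := by
      intro K hK1
      have hKpos : (0:ℝ) < (K:ℝ) := by exact_mod_cast hK1
      by_cases hKM : K ≤ M
      · have hmem : K ∈ Finset.Icc 1 M := Finset.mem_Icc.mpr ⟨hK1, hKM⟩
        have h1 : (1 - π (f - (K:ℝ) * z)) / (K:ℝ)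
            ≤ (Finset.Icc 1 M).sup' hne (fun K => (1 - π (f - (K:ℝ) * z)) / (K:ℝ)) :=
          Finset.le_sup' (f := fun K : ℕ => (1 - π (f - (K:ℝ) * z)) / (K:ℝ)) hmem
        have h2 : (1 - π (f - (K:ℝ) * z)) / (K:ℝ) ≤ w := le_trans h1 (le_max_right _ _)
        rw [div_le_iff₀ hKpos] at h2
        linarith [h2]
      · push_neg at hKM
        have hKM' : (M:ℝ) + 1 ≤ (K:ℝ) := by exact_mod_cast hKM
        have h1 : 1 - π (f - (K:ℝ) * z) ≤ 1 := by
          have := hm.1.1 (f - (K:ℝ)*z); linarith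
        have h2 : (1:ℝ) ≤ (K:ℝ) * (1/((M:ℝ)+1)) := by
          rw [mul_one_div, le_div_iff₀ (by positivity)]
          linarith
        have h3 : (K:ℝ) * (1/((M:ℝ)+1)) ≤ (K:ℝ) * w :=
          mul_le_mul_of_nonneg_left (le_max_left _ _) (by positivity)
        linarith
    exact piKey hm z w hw0 hwlt hKbd
  obtain ⟨K, hK1, hKeq⟩ := hEx
  have hdec : f - z = (f - (K:ℝ)*z) + ((K:ℝ) - 1) * z := by ring
  have hsub : π (f - z) ≤ π (f - (K:ℝ)*z) + π (((K:ℝ) - 1) * z) := by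
    rw [hdec]; exact piSubadd hm _ _
  have hcast : ((K - 1 : ℕ) : ℝ) = (K:ℝ) - 1 := by
    have : (1:ℕ) ≤ K := hK1
    push_cast [Nat.cast_sub this]
    ring
  have hnsm : π (((K:ℝ) - 1) * z) ≤ ((K:ℝ) - 1) * π z := by
    rw [← hcast]
    exact piNsmul hm (K - 1) z
  linarith

lemma piSymEq (hm : MinimalValid f π) : ∀ x, π x + π (f - x) = 1 :=
  fun x => le_antisymm (piSymLe hm x) (piPair hm x)

end SymSec

lemma sufficiency {f : ℝ} {σ : ℝ → ℝ}
    (hnn : ∀ x, 0 ≤ σ x) (h0 : σ 0 = 0)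
    (hsub : ∀ a b, σ (a + b) ≤ σ a + σ b)
    (hper : ∀ (x : ℝ) (n : ℤ), σ (x + n) = σ x)
    (hsym : ∀ x, σ x + σ (f - x) = 1) : MinimalValid f σ := by
  have hσf : σ f = 1 := by
    have := hsym 0
    rw [h0, sub_zero, zero_add] at this
    exact this
  have hval : Valid f σ := by
    rw [Valid_iff]
    refine ⟨hnn, ?_⟩
    intro y hy
    obtain ⟨m, hmz⟩ := hy
    have hmzS : SM (fun r => r) y - f = (m:ℝ) := hmz
    have hcoll : σ (∑ r ∈ y.support, (y r : ℝ) * r) ≤ ∑ r ∈ y.support, (y r : ℝ) * σ r :=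
      collapse σ h0 hsub y.support y (fun r => r)
    have h1 : ∑ r ∈ y.support, (y r : ℝ) * r = SM (fun r => r) y := by
      unfold SM
      exact Finset.sum_congr rfl (fun r _ => by ring)
    have h2 : ∑ r ∈ y.support, (y r : ℝ) * σ r = SM σ y := by
      unfold SM
      exact Finset.sum_congr rfl (fun r _ => by ring)
    rw [h1, h2] at hcoll
    have h3 : SM (fun r => r) y = f + (m:ℝ) := by linarith
    rw [h3, hper f m, hσf] at hcoll
    exact hcoll
  refine ⟨hval, ?_⟩
  rintro ⟨σ', hval', hle, hne⟩
  have hex : ∃ x₀, σ' x₀ < σ x₀ := by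
    by_contra hno
    push_neg at hno
    exact hne (funext fun x => le_antisymm (hle x) (hno x))
  obtain ⟨x₀, hx₀⟩ := hex
  have hyfeas : Feasible f (Finsupp.single x₀ 1 + Finsupp.single (f - x₀) 1) := by
    rw [Feas_iff]
    refine ⟨0, ?_⟩
    rw [SM_add, SM_single', SM_single']
    push_cast; ring
  have h1 := hval'.2 _ hyfeas
  have h2 : SM σ' (Finsupp.single x₀ 1 + Finsupp.single (f - x₀) 1)
      = σ' x₀ + σ' (f - x₀) := by
    rw [SM_add, SM_single, SM_single]
    push_cast; ring
  have h3 : (1:ℝ) ≤ σ' x₀ + σ' (f - x₀) := by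
    rw [← h2]; exact h1
  have h4 : σ' (f - x₀) ≤ σ (f - x₀) := hle _
  have h5 := hsym x₀
  linarith

lemma cpl_oneSide {g : ℝ → ℝ} (hg : ContPiecewiseLinear g) (c : ℝ) :
    ∃ δ > (0:ℝ), ∃ α β : ℝ,
      (∀ u ∈ Set.Icc (0:ℝ) δ, g (c + u) = g c + α * u) ∧
      (∀ u ∈ Set.Icc (0:ℝ) δ, g (c - u) = g c - β * u) := by
  obtain ⟨⟨B, hBcl, hBdisc, hBaff⟩, hcont⟩ := hg
  have hiso : ∃ ε > (0:ℝ), ∀ y ∈ B, |y - c| < ε → y = c := by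
    by_cases hc : c ∈ B
    · exact hBdisc c hc
    · have hopen : IsOpen Bᶜ := hBcl.isOpen_compl
      obtain ⟨ε, hε, hball⟩ := Metric.isOpen_iff.mp hopen c hc
      refine ⟨ε, hε, fun y hy hyc => absurd (hball ?_) (by simpa using hy)⟩
      simpa [Metric.mem_ball, Real.dist_eq] using hyc
  obtain ⟨ε, hε, hisoc⟩ := hiso
  have haffInt : ∀ (I : Set ℝ) (z₀ : ℝ), z₀ ∈ I → IsPreconnected I → I ⊆ Bᶜ →
      ∃ a b : ℝ, ∀ z ∈ I, g z = a * z + b := by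
    intro I z₀ hz₀ hconn hsub
    obtain ⟨a, b, hab⟩ := hBaff z₀ (hsub hz₀)
    exact ⟨a, b, fun z hz =>
      hab z (hconn.subset_connectedComponentIn hz₀ hsub hz)⟩
  have hIoosub : ∀ (lo hi : ℝ), (∀ x ∈ Set.Ioo lo hi, |x - c| < ε ∧ x ≠ c) →
      Set.Ioo lo hi ⊆ Bᶜ := by
    intro lo hi hprop x hx hxB
    obtain ⟨h1, h2⟩ := hprop x hx
    exact h2 (hisoc x hxB h1)
  -- right side
  have hR : ∃ a b : ℝ, ∀ z ∈ Set.Icc c (c + ε/2), g z = a * z + b := by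
    have hsubR : Set.Ioo c (c + ε/2) ⊆ Bᶜ := by
      apply hIoosub
      intro x hx
      obtain ⟨h1, h2⟩ := hx
      constructor
      · rw [abs_lt]; constructor <;> linarith [h1, h2]
      · intro h; rw [h] at h1; linarith
    have hz₀ : c + ε/4 ∈ Set.Ioo c (c + ε/2) := ⟨by linarith, by linarith⟩
    obtain ⟨a, b, hab⟩ := haffInt _ _ hz₀ isPreconnected_Ioo hsubR
    refine ⟨a, b, ?_⟩
    have hEq : Set.EqOn g (fun z => a * z + b) (closure (Set.Ioo c (c + ε/2))) := by
      apply Set.EqOn.closure (fun z hz => hab z hz) hcont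
      exact (continuous_const.mul continuous_id).add continuous_const
    rw [closure_Ioo (by intro h; linarith [congrArg id h] : c ≠ c + ε/2)] at hEq
    exact fun z hz => hEq hz
  have hL : ∃ a b : ℝ, ∀ z ∈ Set.Icc (c - ε/2) c, g z = a * z + b := by
    have hsubL : Set.Ioo (c - ε/2) c ⊆ Bᶜ := by
      apply hIoosub
      intro x hx
      obtain ⟨h1, h2⟩ := hx
      constructor
      · rw [abs_lt]; constructor <;> linarith [h1, h2]
      · intro h; rw [h] at h2; linarith
    have hz₀ : c - ε/4 ∈ Set.Ioo (c - ε/2) c := ⟨by linarith, by linarith⟩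
    obtain ⟨a, b, hab⟩ := haffInt _ _ hz₀ isPreconnected_Ioo hsubL
    refine ⟨a, b, ?_⟩
    have hEq : Set.EqOn g (fun z => a * z + b) (closure (Set.Ioo (c - ε/2) c)) := by
      apply Set.EqOn.closure (fun z hz => hab z hz) hcont
      exact (continuous_const.mul continuous_id).add continuous_const
    rw [closure_Ioo (by intro h; linarith [congrArg id h] : c - ε/2 ≠ c)] at hEq
    exact fun z hz => hEq hz
  obtain ⟨a₁, b₁, hR⟩ := hR
  obtain ⟨a₂, b₂, hL⟩ := hL
  refine ⟨ε/2, by positivity, a₁, a₂, ?_, ?_⟩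
  · intro u hu
    obtain ⟨h0, h1⟩ := hu
    have hgc : g c = a₁ * c + b₁ := hR c ⟨le_refl c, by linarith⟩
    have := hR (c + u) ⟨by linarith, by linarith⟩
    rw [this, hgc]; ring
  · intro u hu
    obtain ⟨h0, h1⟩ := hu
    have hgc : g c = a₂ * c + b₂ := hL c ⟨by linarith, le_refl c⟩
    have := hL (c - u) ⟨by linarith, by linarith⟩
    rw [this, hgc]; ring

noncomputable def DD (g : ℝ → ℝ) (x y : ℝ) : ℝ := g x + g y - g (x + y)

def Sl (f : ℝ) (π πb : ℝ → ℝ) : Set ℝ :=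
  {l | 0 ≤ l ∧ (∀ x, l * |πb x| ≤ π x) ∧ ∀ x y, l * |DD πb x y| ≤ DD π x y}

lemma SM_funadd (g h : ℝ → ℝ) (y : ℝ →₀ ℕ) :
    SM (fun x => g x + h x) y = SM g y + SM h y := by
  unfold SM
  rw [← Finset.sum_add_distrib]
  exact Finset.sum_congr rfl (fun r _ => by ring)

lemma SM_funsmul (t : ℝ) (h : ℝ → ℝ) (y : ℝ →₀ ℕ) :
    SM (fun x => t * h x) y = t * SM h y := by
  unfold SM
  rw [Finset.mul_sum]
  exact Finset.sum_congr rfl (fun r _ => by ring)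

section MainSec

variable {f : ℝ} {π πb : ℝ → ℝ}

lemma one_mem_S (hπ : MinimalValid f π) (hplus : MinimalValid f (fun x => π x + πb x))
    (hminus : MinimalValid f (fun x => π x - πb x)) :
    (0:ℝ) ≤ 1 ∧ (∀ x, 1 * |πb x| ≤ π x) ∧ ∀ x y, 1 * |DD πb x y| ≤ DD π x y := by
  refine ⟨zero_le_one, ?_, ?_⟩
  · intro x
    have h1 : 0 ≤ π x + πb x := hplus.1.1 x
    have h2 : 0 ≤ π x - πb x := hminus.1.1 x
    rw [one_mul, abs_le]
    constructor <;> linarith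
  · intro x y
    have h1 : π (x+y) + πb (x+y) ≤ (π x + πb x) + (π y + πb y) := by
      simpa using piSubadd hplus x y
    have h2 : π (x+y) - πb (x+y) ≤ (π x - πb x) + (π y - πb y) := by
      simpa using piSubadd hminus x y
    rw [one_mul, abs_le]
    unfold DD
    constructor <;> linarith

lemma S_bddAbove (hπ : MinimalValid f π) (hne : πb ≠ 0) :
    BddAbove {l : ℝ | 0 ≤ l ∧ (∀ x, l * |πb x| ≤ π x) ∧ ∀ x y, l * |DD πb x y| ≤ DD π x y} := by
  have hx₀ : ∃ x₀, πb x₀ ≠ 0 := by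
    by_contra h
    push_neg at h
    exact hne (funext h)
  obtain ⟨x₀, hx₀⟩ := hx₀
  have habs : 0 < |πb x₀| := abs_pos.mpr hx₀
  refine ⟨π x₀ / |πb x₀|, ?_⟩
  rintro l ⟨hl0, hl1, _⟩
  rw [le_div_iff₀ habs]
  exact hl1 x₀

end MainSec

section MainSec2

variable {f : ℝ} {π πb : ℝ → ℝ}

lemma one_mem_Sl (hπ : MinimalValid f π) (hplus : MinimalValid f (fun x => π x + πb x))
    (hminus : MinimalValid f (fun x => π x - πb x)) : (1:ℝ) ∈ Sl f π πb :=
  one_mem_S hπ hplus hminus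

lemma DDpi_nonneg (hπ : MinimalValid f π) (hplus : MinimalValid f (fun x => π x + πb x))
    (hminus : MinimalValid f (fun x => π x - πb x)) : ∀ x y, 0 ≤ DD π x y := by
  intro x y
  have := (one_mem_Sl hπ hplus hminus).2.2 x y
  have h0 : (0:ℝ) ≤ 1 * |DD πb x y| := by positivity
  linarith

lemma lstar_mem (hπ : MinimalValid f π) (hplus : MinimalValid f (fun x => π x + πb x))
    (hminus : MinimalValid f (fun x => π x - πb x)) (hne : πb ≠ 0) :
    sSup (Sl f π πb) ∈ Sl f π πb ∧ 1 ≤ sSup (Sl f π πb) := by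
  have hbdd := S_bddAbove hπ hne (f := f)
  have h1 := one_mem_Sl hπ hplus hminus
  have hub : 1 ≤ sSup (Sl f π πb) := le_csSup hbdd h1
  have hnonempty : (Sl f π πb).Nonempty := ⟨1, h1⟩
  refine ⟨⟨by linarith, ?_, ?_⟩, hub⟩
  · intro x
    by_cases habs : |πb x| = 0
    · rw [habs, mul_zero]
      exact hπ.1.1 x
    · have hpos : 0 < |πb x| := lt_of_le_of_ne (abs_nonneg _) (Ne.symm habs)
      have : sSup (Sl f π πb) ≤ π x / |πb x| := by
        apply csSup_le hnonempty
        rintro l ⟨_, hl1, _⟩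
        rw [le_div_iff₀ hpos]
        exact hl1 x
      rw [← le_div_iff₀ hpos]
      exact this
  · intro x y
    by_cases habs : |DD πb x y| = 0
    · rw [habs, mul_zero]
      exact DDpi_nonneg hπ hplus hminus x y
    · have hpos : 0 < |DD πb x y| := lt_of_le_of_ne (abs_nonneg _) (Ne.symm habs)
      have : sSup (Sl f π πb) ≤ DD π x y / |DD πb x y| := by
        apply csSup_le hnonempty
        rintro l ⟨_, _, hl2⟩
        rw [le_div_iff₀ hpos]
        exact hl2 x y
      rw [← le_div_iff₀ hpos]
      exact this

lemma pib_zero (hπ : MinimalValid f π) (hplus : MinimalValid f (fun x => π x + πb x)) :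
    πb 0 = 0 := by
  have h1 := piZero hπ
  have h2 : π 0 + πb 0 = 0 := piZero hplus
  linarith

lemma pib_per (hπ : MinimalValid f π) (hplus : MinimalValid f (fun x => π x + πb x)) :
    ∀ (x : ℝ) (n : ℤ), πb (x + n) = πb x := by
  intro x n
  have h1 := piShift hπ x n
  have h2 : π (x + n) + πb (x + n) = π x + πb x := piShift hplus x n
  linarith

lemma pib_sym (hπ : MinimalValid f π) (hplus : MinimalValid f (fun x => π x + πb x)) :
    ∀ x, πb x + πb (f - x) = 0 := by
  intro x
  have h1 := piSymEq hπ x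
  have h2 : (π x + πb x) + (π (f - x) + πb (f - x)) = 1 := piSymEq hplus x
  linarith

lemma min_theta (hπ : MinimalValid f π) (hplus : MinimalValid f (fun x => π x + πb x))
    (hminus : MinimalValid f (fun x => π x - πb x)) (hne : πb ≠ 0)
    (t : ℝ) (ht : |t| ≤ sSup (Sl f π πb)) :
    MinimalValid f (fun x => π x + t * πb x) := by
  obtain ⟨⟨hl0, hl1, hl2⟩, hub⟩ := lstar_mem hπ hplus hminus hne
  have habs : ∀ c : ℝ, -(sSup (Sl f π πb) * |c|) ≤ t * c := by
    intro c
    have h1 : |t * c| ≤ sSup (Sl f π πb) * |c| := by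
      rw [abs_mul]
      exact mul_le_mul_of_nonneg_right ht (abs_nonneg c)
    have h2 : -(t*c) ≤ |t * c| := neg_le_abs _
    linarith
  apply sufficiency
  · intro x
    have := habs (πb x)
    have := hl1 x
    linarith
  · rw [piZero hπ, pib_zero hπ hplus, mul_zero, add_zero]
  · intro a b
    have h1 := hl2 a b
    have h2 := habs (DD πb a b)
    unfold DD at h1 h2
    have h3 : t * πb (a + b) = t * πb a + t * πb b - t * (πb a + πb b - πb (a+b)) := by ring
    unfold DD at *
    nlinarith [h1, h2]
  · intro x n
    rw [piShift hπ x n, pib_per hπ hplus x n]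
  · intro x
    have h1 := piSymEq hπ x
    have h2 := pib_sym hπ hplus x
    have h3 : t * πb x + t * πb (f - x) = t * (πb x + πb (f - x)) := by ring
    rw [h2, mul_zero] at h3
    linarith

end MainSec2

section MainSec3

variable {f : ℝ} {π πb : ℝ → ℝ}

lemma DD_mix (t : ℝ) (x y : ℝ) :
    DD (fun z => π z + t * πb z) x y = DD π x y + t * DD πb x y := by
  unfold DD; ring

lemma E_mem_iff (g : ℝ → ℝ) (x y : ℝ) : (x, y) ∈ Eset g ↔ DD g x y = 0 := by
  unfold Eset DD
  constructor
  · intro h; simp only [Set.mem_setOf_eq] at h; linarith [h]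
  · intro h; simp only [Set.mem_setOf_eq]; linarith [h]

lemma E_subset (hπ : MinimalValid f π) (hplus : MinimalValid f (fun x => π x + πb x))
    (hminus : MinimalValid f (fun x => π x - πb x)) (hne : πb ≠ 0)
    (t : ℝ) (ht : |t| ≤ sSup (Sl f π πb)) :
    Eset π ⊆ Eset (fun x => π x + t * πb x) := by
  obtain ⟨⟨hl0, hl1, hl2⟩, hub⟩ := lstar_mem hπ hplus hminus hne
  rintro ⟨x, y⟩ hp
  rw [E_mem_iff] at hp ⊢
  have h2 := hl2 x y
  rw [hp, mul_comm] at h2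
  have hb : |DD πb x y| = 0 := by
    rcases eq_or_lt_of_le (abs_nonneg (DD πb x y)) with h | h
    · exact h.symm
    · nlinarith
  rw [DD_mix, hp, abs_eq_zero.mp hb, mul_zero, add_zero]

lemma doubling (hπ : MinimalValid f π) (hplus : MinimalValid f (fun x => π x + πb x))
    (hminus : MinimalValid f (fun x => π x - πb x)) (hne : πb ≠ 0)
    (t : ℝ) (ht : |t| ≤ sSup (Sl f π πb))
    (hE : Eset (fun x => π x + t * πb x) = Eset π)
    (x : ℝ) (hθx : π x + t * πb x = 0) (hπx : 0 < π x) : False := by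
  have hmθ := min_theta hπ hplus hminus hne t ht
  have claim : ∀ k : ℕ, (π ((2^k : ℝ) * x) + t * πb ((2^k : ℝ) * x) = 0)
      ∧ π ((2^k:ℝ) * x) = (2^k:ℝ) * π x := by
    intro k
    induction k with
    | zero => simp [hθx]
    | succ k ih =>
      obtain ⟨ih1, ih2⟩ := ih
      set u := (2^k : ℝ) * x with hu
      have h2u : (2^(k+1) : ℝ) * x = u + u := by rw [hu]; ring
      have hsub : π (u+u) + t * πb (u+u) ≤ (π u + t * πb u) + (π u + t * πb u) := by
        simpa using piSubadd hmθ u u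
      have hnn : 0 ≤ π (u+u) + t * πb (u+u) := hmθ.1.1 (u+u)
      have hθ2u : π (u+u) + t * πb (u+u) = 0 := by linarith
      have hEθ : (u, u) ∈ Eset (fun x => π x + t * πb x) := by
        rw [E_mem_iff, DD_mix]
        unfold DD
        linarith
      rw [hE, E_mem_iff] at hEθ
      unfold DD at hEθ
      constructor
      · rw [h2u]; linarith
      · rw [h2u]
        have : π (u + u) = π u + π u := by linarith
        rw [this, ih2]; ring
  obtain ⟨n, hn⟩ : ∃ n:ℕ, 1/π x < (2:ℝ)^n := pow_unbounded_of_one_lt (1/π x) one_lt_two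
  have h1 : 1 < (2^n : ℝ) * π x := by
    rw [div_lt_iff₀ hπx] at hn
    linarith
  have h2 := piLeOne hπ ((2^n : ℝ) * x)
  rw [(claim n).2] at h2
  linarith

lemma substep1 (hπ : MinimalValid f π) (hplus : MinimalValid f (fun x => π x + πb x))
    (hminus : MinimalValid f (fun x => π x - πb x)) (hne : πb ≠ 0)
    (hEp : Eset (fun x => π x + sSup (Sl f π πb) * πb x) = Eset π)
    (hEm : Eset (fun x => π x + (-sSup (Sl f π πb)) * πb x) = Eset π) :
    ∀ x, sSup (Sl f π πb) * |πb x| = π x → πb x = 0 := by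
  obtain ⟨⟨hl0, hl1, hl2⟩, hub⟩ := lstar_mem hπ hplus hminus hne
  intro x hx
  by_contra hb
  have habs : 0 < |πb x| := abs_pos.mpr hb
  have hπx : 0 < π x := by
    rw [← hx]
    have : 0 < sSup (Sl f π πb) := by linarith
    positivity
  rcases lt_or_gt_of_ne hb with hneg | hpos
  · refine doubling hπ hplus hminus hne (sSup (Sl f π πb))
      (by rw [abs_of_nonneg hl0]) hEp x ?_ hπx
    rw [← hx, abs_of_neg hneg]; ring
  · refine doubling hπ hplus hminus hne (-sSup (Sl f π πb))
      (by rw [abs_neg, abs_of_nonneg hl0]) hEm x ?_ hπx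
    rw [← hx, abs_of_pos hpos]; ring

lemma substep2 (hπ : MinimalValid f π) (hplus : MinimalValid f (fun x => π x + πb x))
    (hminus : MinimalValid f (fun x => π x - πb x)) (hne : πb ≠ 0)
    (hEp : Eset (fun x => π x + sSup (Sl f π πb) * πb x) = Eset π)
    (hEm : Eset (fun x => π x + (-sSup (Sl f π πb)) * πb x) = Eset π) :
    ∀ x y, sSup (Sl f π πb) * |DD πb x y| = DD π x y → DD πb x y = 0 := by
  obtain ⟨⟨hl0, hl1, hl2⟩, hub⟩ := lstar_mem hπ hplus hminus hne
  intro x y hxy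
  by_contra hb
  have hlpos : 0 < sSup (Sl f π πb) := by linarith
  rcases lt_or_gt_of_ne hb with hneg | hpos
  · have hmem : (x, y) ∈ Eset (fun z => π z + sSup (Sl f π πb) * πb z) := by
      rw [E_mem_iff, DD_mix, ← hxy, abs_of_neg hneg]; ring
    rw [hEp, E_mem_iff] at hmem
    rw [hmem] at hxy
    have : |DD πb x y| = 0 := by
      have := abs_nonneg (DD πb x y)
      nlinarith
    exact hb (abs_eq_zero.mp this)
  · have hmem : (x, y) ∈ Eset (fun z => π z + (-sSup (Sl f π πb)) * πb z) := by
      rw [E_mem_iff, DD_mix, ← hxy, abs_of_pos hpos]; ring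
    rw [hEm, E_mem_iff] at hmem
    rw [hmem] at hxy
    have : |DD πb x y| = 0 := by
      have := abs_nonneg (DD πb x y)
      nlinarith
    exact hb (abs_eq_zero.mp this)

end MainSec3

lemma per_fract {g : ℝ → ℝ} (hper : ∀ (x : ℝ) (n : ℤ), g (x + n) = g x) (x : ℝ) :
    g (Int.fract x) = g x := by
  have h := hper x (-⌊x⌋)
  rw [Int.cast_neg, ← sub_eq_add_neg] at h
  rw [Int.fract]
  exact h

lemma ray_margin {L A Bv δr : ℝ} (hL1 : 1 ≤ L) (hδ : 0 < δr)
    (hglob : ∀ u ∈ Set.Icc (0:ℝ) δr, L * |Bv * u| ≤ A * u)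
    (hstrict : ∀ u ∈ Set.Icc (0:ℝ) δr, L * |Bv * u| = A * u → Bv * u = 0) :
    ∃ ε > (0:ℝ), (L + ε) * |Bv| ≤ A := by
  have hδmem : δr ∈ Set.Icc (0:ℝ) δr := ⟨le_of_lt hδ, le_refl _⟩
  by_cases hB : Bv = 0
  · refine ⟨1, one_pos, ?_⟩
    rw [hB, abs_zero, mul_zero]
    have := hglob δr hδmem
    rw [hB, zero_mul, abs_zero, mul_zero] at this
    nlinarith
  · have habs : 0 < |Bv| := abs_pos.mpr hB
    have h1 : L * |Bv| ≤ A := by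
      have := hglob δr hδmem
      rw [abs_mul, abs_of_pos hδ] at this
      nlinarith
    have h2 : L * |Bv| ≠ A := by
      intro heq
      have : L * |Bv * δr| = A * δr := by
        rw [abs_mul, abs_of_pos hδ, ← mul_assoc, heq]
      have := hstrict δr hδmem this
      rcases mul_eq_zero.mp this with h | h
      · exact hB h
      · linarith
    have h3 : L * |Bv| < A := lt_of_le_of_ne h1 h2
    refine ⟨(A - L * |Bv|) / |Bv|, div_pos (by linarith) habs, ?_⟩
    rw [add_mul, div_mul_cancel₀ _ (ne_of_gt habs)]
    linarith

lemma margin1 (hπ : MinimalValid f π) (hplus : MinimalValid f (fun x => π x + πb x))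
    (hminus : MinimalValid f (fun x => π x - πb x)) (hne : πb ≠ 0)
    (hcpl : ContPiecewiseLinear π) (hcplb : ContPiecewiseLinear πb)
    (hEp : Eset (fun x => π x + sSup (Sl f π πb) * πb x) = Eset π)
    (hEm : Eset (fun x => π x + (-sSup (Sl f π πb)) * πb x) = Eset π) :
    ∃ ε > (0:ℝ), ∀ x, (sSup (Sl f π πb) + ε) * |πb x| ≤ π x := by
  obtain ⟨⟨hl0, hl1, hl2⟩, hub⟩ := lstar_mem hπ hplus hminus hne
  set L := sSup (Sl f π πb) with hL
  by_contra hcon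
  push_neg at hcon
  have hseq : ∀ n : ℕ, ∃ x ∈ Set.Icc (0:ℝ) 1, π x < (L + 1/(n+1)) * |πb x| := by
    intro n
    obtain ⟨x, hx⟩ := hcon (1/(n+1)) (by positivity)
    refine ⟨Int.fract x, ⟨Int.fract_nonneg x, le_of_lt (Int.fract_lt_one x)⟩, ?_⟩
    rw [per_fract (fun z m => piShift hπ z m) x, per_fract (fun z m => pib_per hπ hplus z m) x]
    exact hx
  choose xs hxsmem hxslt using hseq
  obtain ⟨xb, hxbmem, φ, hφ, hconv⟩ := isCompact_Icc.tendsto_subseq hxsmem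
  have t1 : Filter.Tendsto (fun n => π (xs (φ n))) Filter.atTop (nhds (π xb)) :=
    (hcpl.2.tendsto xb).comp hconv
  have tφ : Filter.Tendsto φ Filter.atTop Filter.atTop := hφ.tendsto_atTop
  have tdiv : Filter.Tendsto (fun n : ℕ => 1/((φ n : ℝ)+1)) Filter.atTop (nhds 0) :=
    tendsto_one_div_add_atTop_nhds_zero_nat.comp tφ
  have t2 : Filter.Tendsto (fun n => (L + 1/((φ n : ℝ)+1)) * |πb (xs (φ n))|)
      Filter.atTop (nhds ((L + 0) * |πb xb|)) := by
    apply Filter.Tendsto.mul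
    · exact tendsto_const_nhds.add tdiv
    · exact (continuous_abs.tendsto _).comp ((hcplb.2.tendsto xb).comp hconv)
  have hle : π xb ≤ (L + 0) * |πb xb| :=
    le_of_tendsto_of_tendsto' t1 t2 (fun n => le_of_lt (hxslt (φ n)))
  rw [add_zero] at hle
  have heq : L * |πb xb| = π xb := le_antisymm (hl1 xb) hle
  have hb0 : πb xb = 0 := substep1 hπ hplus hminus hne hEp hEm xb heq
  have hπ0 : π xb = 0 := by rw [← heq, hb0, abs_zero, mul_zero]
  obtain ⟨δ₁, hδ₁, α₁, β₁, hr₁, hl₁⟩ := cpl_oneSide hcpl xb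
  obtain ⟨δ₂, hδ₂, α₂, β₂, hr₂, hl₂'⟩ := cpl_oneSide hcplb xb
  set δ := min δ₁ δ₂ with hδdef
  have hδpos : 0 < δ := lt_min hδ₁ hδ₂
  have hmemd : ∀ u ∈ Set.Icc (0:ℝ) δ, u ∈ Set.Icc (0:ℝ) δ₁ ∧ u ∈ Set.Icc (0:ℝ) δ₂ := by
    intro u hu
    obtain ⟨h0, h1⟩ := hu
    exact ⟨⟨h0, le_trans h1 (min_le_left _ _)⟩, ⟨h0, le_trans h1 (min_le_right _ _)⟩⟩
  have hfr : ∀ u ∈ Set.Icc (0:ℝ) δ, π (xb + u) = α₁ * u ∧ πb (xb + u) = α₂ * u := by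
    intro u hu
    obtain ⟨hu1, hu2⟩ := hmemd u hu
    rw [hr₁ u hu1, hr₂ u hu2, hπ0, hb0]
    constructor <;> ring
  have hfl : ∀ u ∈ Set.Icc (0:ℝ) δ, π (xb - u) = (-β₁) * u ∧ πb (xb - u) = (-β₂) * u := by
    intro u hu
    obtain ⟨hu1, hu2⟩ := hmemd u hu
    rw [hl₁ u hu1, hl₂' u hu2, hπ0, hb0]
    constructor <;> ring
  have hεR : ∃ ε > (0:ℝ), (L + ε) * |α₂| ≤ α₁ := by
    apply ray_margin hub hδpos (Bv := α₂)
    · intro u hu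
      have h := hfr u hu
      have := hl1 (xb + u)
      rw [h.1, h.2] at this
      exact this
    · intro u hu hequ
      have h := hfr u hu
      have : L * |πb (xb + u)| = π (xb + u) := by rw [h.1, h.2]; exact hequ
      have := substep1 hπ hplus hminus hne hEp hEm _ this
      rw [h.2] at this
      exact this
  have hεL : ∃ ε > (0:ℝ), (L + ε) * |(-β₂)| ≤ (-β₁) := by
    apply ray_margin hub hδpos (Bv := -β₂)
    · intro u hu
      have h := hfl u hu
      have := hl1 (xb - u)
      rw [h.1, h.2] at this
      exact this
    · intro u hu hequ
      have h := hfl u hu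
      have : L * |πb (xb - u)| = π (xb - u) := by rw [h.1, h.2]; exact hequ
      have := substep1 hπ hplus hminus hne hEp hEm _ this
      rw [h.2] at this
      exact this
  obtain ⟨εR, hεRpos, hεRle⟩ := hεR
  obtain ⟨εL, hεLpos, hεLle⟩ := hεL
  set ε := min εR εL with hεdef
  have hεpos : 0 < ε := lt_min hεRpos hεLpos
  have hlocal : ∀ x, |x - xb| ≤ δ → (L + ε) * |πb x| ≤ π x := by
    intro x hx
    rcases le_or_gt xb x with hcase | hcase
    · set u := x - xb with hudef
      have hu : u ∈ Set.Icc (0:ℝ) δ := ⟨by linarith, by rw [abs_of_nonneg (by linarith : (0:ℝ) ≤ u)] at hx; exact hx⟩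
      have h := hfr u hu
      have hxeq : x = xb + u := by rw [hudef]; ring
      rw [hxeq, h.1, h.2, abs_mul, abs_of_nonneg hu.1]
      have : (L + ε) * |α₂| ≤ α₁ := le_trans
        (by nlinarith [abs_nonneg α₂, min_le_left εR εL] : (L + ε) * |α₂| ≤ (L + εR) * |α₂|) hεRle
      nlinarith [hu.1, abs_nonneg α₂]
    · set u := xb - x with hudef
      have hu : u ∈ Set.Icc (0:ℝ) δ := ⟨by linarith, by
        rw [abs_of_neg (by linarith : x - xb < 0)] at hx; linarith⟩
      have h := hfl u hu
      have hxeq : x = xb - u := by rw [hudef]; ring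
      rw [hxeq, h.1, h.2, abs_mul, abs_of_nonneg hu.1]
      have : (L + ε) * |(-β₂)| ≤ (-β₁) := le_trans
        (by nlinarith [abs_nonneg (-β₂), min_le_right εR εL] : (L + ε) * |(-β₂)| ≤ (L + εL) * |(-β₂)|) hεLle
      nlinarith [hu.1, abs_nonneg (-β₂)]
  obtain ⟨N₂, hN₂⟩ := exists_nat_one_div_lt hεpos
  have hconv' := Metric.tendsto_atTop.mp hconv δ hδpos
  obtain ⟨N₁, hN₁⟩ := hconv'
  set n := max N₁ N₂ with hn
  have hd : |xs (φ n) - xb| ≤ δ := le_of_lt (by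
    have := hN₁ n (le_max_left _ _)
    rwa [Real.dist_eq] at this)
  have hsmall : 1/((φ n : ℝ)+1) ≤ ε := by
    have h1 : (N₂:ℝ) ≤ φ n := by
      have : N₂ ≤ n := le_max_right _ _
      have := le_trans this (hφ.le_apply)
      exact_mod_cast this
    have h2 : 1/((φ n:ℝ)+1) ≤ 1/((N₂:ℝ)+1) := by
      apply div_le_div_of_nonneg_left one_pos.le (by positivity)
      linarith
    linarith [hN₂, h2]
  have hviol := hxslt (φ n)
  have hloc := hlocal (xs (φ n)) hd
  have hmono : (L + 1/((φ n : ℝ)+1)) * |πb (xs (φ n))| ≤ (L + ε) * |πb (xs (φ n))| := by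
    apply mul_le_mul_of_nonneg_right _ (abs_nonneg _)
    linarith
  linarith

lemma cone_alg {L ε1 ε2 A1 A2 B1 B2 c1 c2 P Q : ℝ}
    (hL : 0 ≤ L) (hc1 : 0 ≤ c1) (hc2 : 0 ≤ c2) (hε1 : 0 < ε1) (hε2 : 0 < ε2)
    (h1 : (L + ε1) * |B1| ≤ A1) (h2 : (L + ε2) * |B2| ≤ A2)
    (hP : P = c1 * A1 + c2 * A2) (hQ : Q = c1 * B1 + c2 * B2) :
    (L + min ε1 ε2) * |Q| ≤ P := by
  have hm : 0 < min ε1 ε2 := lt_min hε1 hε2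
  have habs : |Q| ≤ c1 * |B1| + c2 * |B2| := by
    rw [hQ]
    calc |c1 * B1 + c2 * B2| ≤ |c1 * B1| + |c2 * B2| := abs_add_le _ _
      _ = c1 * |B1| + c2 * |B2| := by
          rw [abs_mul, abs_mul, abs_of_nonneg hc1, abs_of_nonneg hc2]
  have step1 : (L + min ε1 ε2) * |Q| ≤ (L + min ε1 ε2) * (c1 * |B1| + c2 * |B2|) := by
    apply mul_le_mul_of_nonneg_left habs
    linarith
  have step2 : (L + min ε1 ε2) * (c1 * |B1| + c2 * |B2|)
      ≤ c1 * ((L + ε1) * |B1|) + c2 * ((L + ε2) * |B2|) := by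
    have e1 : (L + min ε1 ε2) * |B1| ≤ (L + ε1) * |B1| :=
      mul_le_mul_of_nonneg_right (by linarith [min_le_left ε1 ε2]) (abs_nonneg _)
    have e2 : (L + min ε1 ε2) * |B2| ≤ (L + ε2) * |B2| :=
      mul_le_mul_of_nonneg_right (by linarith [min_le_right ε1 ε2]) (abs_nonneg _)
    nlinarith [e1, e2]
  have step3 : c1 * ((L + ε1) * |B1|) + c2 * ((L + ε2) * |B2|) ≤ c1 * A1 + c2 * A2 := by
    have := mul_le_mul_of_nonneg_left h1 hc1
    have := mul_le_mul_of_nonneg_left h2 hc2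
    linarith
  rw [hP]
  linarith

lemma DD_fract {g : ℝ → ℝ} (hper : ∀ (x : ℝ) (n : ℤ), g (x + n) = g x) (x y : ℝ) :
    DD g (Int.fract x) (Int.fract y) = DD g x y := by
  unfold DD
  rw [per_fract hper x, per_fract hper y]
  have h3 : Int.fract x + Int.fract y = (x + y) + (-⌊x⌋ - ⌊y⌋ : ℤ) := by
    rw [Int.fract, Int.fract]
    push_cast
    ring
  rw [h3, hper (x+y) _]

lemma margin2 (hπ : MinimalValid f π) (hplus : MinimalValid f (fun x => π x + πb x))
    (hminus : MinimalValid f (fun x => π x - πb x)) (hne : πb ≠ 0)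
    (hcpl : ContPiecewiseLinear π) (hcplb : ContPiecewiseLinear πb)
    (hEp : Eset (fun x => π x + sSup (Sl f π πb) * πb x) = Eset π)
    (hEm : Eset (fun x => π x + (-sSup (Sl f π πb)) * πb x) = Eset π) :
    ∃ ε > (0:ℝ), ∀ x y, (sSup (Sl f π πb) + ε) * |DD πb x y| ≤ DD π x y := by
  obtain ⟨⟨hl0, hl1, hl2⟩, hub⟩ := lstar_mem hπ hplus hminus hne
  set L := sSup (Sl f π πb) with hL
  by_contra hcon
  push_neg at hcon
  have hseq : ∀ n : ℕ, ∃ p ∈ (Set.Icc (0:ℝ) 1 ×ˢ Set.Icc (0:ℝ) 1),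
      DD π p.1 p.2 < (L + 1/(n+1)) * |DD πb p.1 p.2| := by
    intro n
    obtain ⟨x, y, hxy⟩ := hcon (1/(n+1)) (by positivity)
    refine ⟨(Int.fract x, Int.fract y), ⟨⟨Int.fract_nonneg x, (Int.fract_lt_one x).le⟩,
      ⟨Int.fract_nonneg y, (Int.fract_lt_one y).le⟩⟩, ?_⟩
    simp only
    rw [DD_fract (fun z m => piShift hπ z m), DD_fract (fun z m => pib_per hπ hplus z m)]
    exact hxy
  choose ps hpsmem hpslt using hseq
  obtain ⟨pb, hpbmem, φ, hφ, hconv⟩ := (isCompact_Icc.prod isCompact_Icc).tendsto_subseq hpsmem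
  obtain ⟨xb, yb⟩ := pb
  have hDDcont : ∀ {g : ℝ → ℝ}, Continuous g → Continuous (fun p : ℝ × ℝ => DD g p.1 p.2) := by
    intro g hg
    exact ((hg.comp continuous_fst).add (hg.comp continuous_snd)).sub
      (hg.comp (continuous_fst.add continuous_snd))
  have t1 : Filter.Tendsto (fun n => DD π (ps (φ n)).1 (ps (φ n)).2) Filter.atTop
      (nhds (DD π xb yb)) := ((hDDcont hcpl.2).tendsto (xb, yb)).comp hconv
  have tφ : Filter.Tendsto φ Filter.atTop Filter.atTop := hφ.tendsto_atTop
  have tdiv : Filter.Tendsto (fun n : ℕ => 1/((φ n : ℝ)+1)) Filter.atTop (nhds 0) :=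
    tendsto_one_div_add_atTop_nhds_zero_nat.comp tφ
  have t2 : Filter.Tendsto (fun n => (L + 1/((φ n : ℝ)+1)) * |DD πb (ps (φ n)).1 (ps (φ n)).2|)
      Filter.atTop (nhds ((L + 0) * |DD πb xb yb|)) := by
    apply Filter.Tendsto.mul
    · exact tendsto_const_nhds.add tdiv
    · exact (continuous_abs.tendsto _).comp (((hDDcont hcplb.2).tendsto (xb, yb)).comp hconv)
  have hle : DD π xb yb ≤ (L + 0) * |DD πb xb yb| :=
    le_of_tendsto_of_tendsto' t1 t2 (fun n => le_of_lt (hpslt (φ n)))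
  rw [add_zero] at hle
  have heq : L * |DD πb xb yb| = DD π xb yb := le_antisymm (hl2 xb yb) hle
  have hb0 : DD πb xb yb = 0 := substep2 hπ hplus hminus hne hEp hEm xb yb heq
  have hD0 : DD π xb yb = 0 := by rw [← heq, hb0, abs_zero, mul_zero]
  unfold DD at hb0 hD0
  obtain ⟨δ1, hδ1, a1p, a1m, hπ1r, hπ1l⟩ := cpl_oneSide hcpl xb
  obtain ⟨δ2, hδ2, a2p, a2m, hπ2r, hπ2l⟩ := cpl_oneSide hcpl yb
  obtain ⟨δ3, hδ3, a3p, a3m, hπ3r, hπ3l⟩ := cpl_oneSide hcpl (xb + yb)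
  obtain ⟨δ4, hδ4, b1p, b1m, hb1r, hb1l⟩ := cpl_oneSide hcplb xb
  obtain ⟨δ5, hδ5, b2p, b2m, hb2r, hb2l⟩ := cpl_oneSide hcplb yb
  obtain ⟨δ6, hδ6, b3p, b3m, hb3r, hb3l⟩ := cpl_oneSide hcplb (xb + yb)
  set δ : ℝ := min δ1 (min δ2 (min δ3 (min δ4 (min δ5 δ6)))) with hδdef
  have hδpos : 0 < δ := by
    refine lt_min hδ1 (lt_min hδ2 (lt_min hδ3 (lt_min hδ4 (lt_min hδ5 hδ6))))
  have hsub1 : ∀ u ∈ Set.Icc (0:ℝ) δ, u ∈ Set.Icc (0:ℝ) δ1 :=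
    fun u hu => ⟨hu.1, le_trans hu.2 (min_le_left _ _)⟩
  have hsub2 : ∀ u ∈ Set.Icc (0:ℝ) δ, u ∈ Set.Icc (0:ℝ) δ2 :=
    fun u hu => ⟨hu.1, le_trans hu.2 (le_trans (min_le_right _ _) (min_le_left _ _))⟩
  have hsub3 : ∀ u ∈ Set.Icc (0:ℝ) δ, u ∈ Set.Icc (0:ℝ) δ3 :=
    fun u hu => ⟨hu.1, le_trans hu.2 (le_trans (min_le_right _ _)
      (le_trans (min_le_right _ _) (min_le_left _ _)))⟩
  have hsub4 : ∀ u ∈ Set.Icc (0:ℝ) δ, u ∈ Set.Icc (0:ℝ) δ4 :=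
    fun u hu => ⟨hu.1, le_trans hu.2 (le_trans (min_le_right _ _)
      (le_trans (min_le_right _ _) (le_trans (min_le_right _ _) (min_le_left _ _))))⟩
  have hsub5 : ∀ u ∈ Set.Icc (0:ℝ) δ, u ∈ Set.Icc (0:ℝ) δ5 :=
    fun u hu => ⟨hu.1, le_trans hu.2 (le_trans (min_le_right _ _)
      (le_trans (min_le_right _ _) (le_trans (min_le_right _ _)
        (le_trans (min_le_right _ _) (min_le_left _ _)))))⟩
  have hsub6 : ∀ u ∈ Set.Icc (0:ℝ) δ, u ∈ Set.Icc (0:ℝ) δ6 :=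
    fun u hu => ⟨hu.1, le_trans hu.2 (le_trans (min_le_right _ _)
      (le_trans (min_le_right _ _) (le_trans (min_le_right _ _)
        (le_trans (min_le_right _ _) (min_le_right _ _)))))⟩
  -- restricted affine formulas on [0, δ]
  have F1r : ∀ u ∈ Set.Icc (0:ℝ) δ, π (xb + u) = π xb + a1p * u := fun u hu => hπ1r u (hsub1 u hu)
  have F1l : ∀ u ∈ Set.Icc (0:ℝ) δ, π (xb - u) = π xb - a1m * u := fun u hu => hπ1l u (hsub1 u hu)
  have F2r : ∀ u ∈ Set.Icc (0:ℝ) δ, π (yb + u) = π yb + a2p * u := fun u hu => hπ2r u (hsub2 u hu)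
  have F2l : ∀ u ∈ Set.Icc (0:ℝ) δ, π (yb - u) = π yb - a2m * u := fun u hu => hπ2l u (hsub2 u hu)
  have F3r : ∀ u ∈ Set.Icc (0:ℝ) δ, π ((xb+yb) + u) = π (xb+yb) + a3p * u :=
    fun u hu => hπ3r u (hsub3 u hu)
  have F3l : ∀ u ∈ Set.Icc (0:ℝ) δ, π ((xb+yb) - u) = π (xb+yb) - a3m * u :=
    fun u hu => hπ3l u (hsub3 u hu)
  have G1r : ∀ u ∈ Set.Icc (0:ℝ) δ, πb (xb + u) = πb xb + b1p * u := fun u hu => hb1r u (hsub4 u hu)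
  have G1l : ∀ u ∈ Set.Icc (0:ℝ) δ, πb (xb - u) = πb xb - b1m * u := fun u hu => hb1l u (hsub4 u hu)
  have G2r : ∀ u ∈ Set.Icc (0:ℝ) δ, πb (yb + u) = πb yb + b2p * u := fun u hu => hb2r u (hsub5 u hu)
  have G2l : ∀ u ∈ Set.Icc (0:ℝ) δ, πb (yb - u) = πb yb - b2m * u := fun u hu => hb2l u (hsub5 u hu)
  have G3r : ∀ u ∈ Set.Icc (0:ℝ) δ, πb ((xb+yb) + u) = πb (xb+yb) + b3p * u :=
    fun u hu => hb3r u (hsub6 u hu)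
  have G3l : ∀ u ∈ Set.Icc (0:ℝ) δ, πb ((xb+yb) - u) = πb (xb+yb) - b3m * u :=
    fun u hu => hb3l u (hsub6 u hu)
  -- the six rays
  have mkRay : ∀ (d1 d2 : ℝ) (A Bv : ℝ),
      (∀ u ∈ Set.Icc (0:ℝ) δ, DD π (xb + u*d1) (yb + u*d2) = A * u) →
      (∀ u ∈ Set.Icc (0:ℝ) δ, DD πb (xb + u*d1) (yb + u*d2) = Bv * u) →
      ∃ ε > (0:ℝ), (L + ε) * |Bv| ≤ A := by
    intro d1 d2 A Bv hA hB
    apply ray_margin hub hδpos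
    · intro u hu
      have h := hl2 (xb + u*d1) (yb + u*d2)
      rw [hA u hu, hB u hu] at h
      exact h
    · intro u hu hequ
      have h : L * |DD πb (xb + u*d1) (yb + u*d2)| = DD π (xb + u*d1) (yb + u*d2) := by
        rw [hA u hu, hB u hu]
        exact hequ
      have := substep2 hπ hplus hminus hne hEp hEm _ _ h
      rw [hB u hu] at this
      exact this
  have hR1 : ∃ ε > (0:ℝ), (L + ε) * |b1p - b3p| ≤ a1p - a3p := by
    apply mkRay 1 0
    · intro u hu
      unfold DD
      rw [mul_one, mul_zero, add_zero, F1r u hu,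
        show xb + u + yb = (xb + yb) + u by ring, F3r u hu]
      linarith [hD0]
    · intro u hu
      unfold DD
      rw [mul_one, mul_zero, add_zero, G1r u hu,
        show xb + u + yb = (xb + yb) + u by ring, G3r u hu]
      linarith [hb0]
  have hR2 : ∃ ε > (0:ℝ), (L + ε) * |b2p - b3p| ≤ a2p - a3p := by
    apply mkRay 0 1
    · intro u hu
      unfold DD
      rw [mul_one, mul_zero, add_zero, F2r u hu,
        show xb + (yb + u) = (xb + yb) + u by ring, F3r u hu]
      linarith [hD0]
    · intro u hu
      unfold DD
      rw [mul_one, mul_zero, add_zero, G2r u hu,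
        show xb + (yb + u) = (xb + yb) + u by ring, G3r u hu]
      linarith [hb0]
  have hR3 : ∃ ε > (0:ℝ), (L + ε) * |b1p - b2m| ≤ a1p - a2m := by
    apply mkRay 1 (-1)
    · intro u hu
      unfold DD
      rw [mul_one, show yb + u * (-1) = yb - u by ring, F1r u hu, F2l u hu,
        show xb + u + (yb - u) = xb + yb by ring]
      linarith [hD0]
    · intro u hu
      unfold DD
      rw [mul_one, show yb + u * (-1) = yb - u by ring, G1r u hu, G2l u hu,
        show xb + u + (yb - u) = xb + yb by ring]
      linarith [hb0]
  have hR4 : ∃ ε > (0:ℝ), (L + ε) * |b3m - b2m| ≤ a3m - a2m := by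
    apply mkRay 0 (-1)
    · intro u hu
      unfold DD
      rw [mul_zero, add_zero, show yb + u * (-1) = yb - u by ring, F2l u hu,
        show xb + (yb - u) = (xb + yb) - u by ring, F3l u hu]
      linarith [hD0]
    · intro u hu
      unfold DD
      rw [mul_zero, add_zero, show yb + u * (-1) = yb - u by ring, G2l u hu,
        show xb + (yb - u) = (xb + yb) - u by ring, G3l u hu]
      linarith [hb0]
  have hR5 : ∃ ε > (0:ℝ), (L + ε) * |b3m - b1m| ≤ a3m - a1m := by
    apply mkRay (-1) 0
    · intro u hu
      unfold DD
      rw [mul_zero, add_zero, show xb + u * (-1) = xb - u by ring, F1l u hu,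
        show xb - u + yb = (xb + yb) - u by ring, F3l u hu]
      linarith [hD0]
    · intro u hu
      unfold DD
      rw [mul_zero, add_zero, show xb + u * (-1) = xb - u by ring, G1l u hu,
        show xb - u + yb = (xb + yb) - u by ring, G3l u hu]
      linarith [hb0]
  have hR6 : ∃ ε > (0:ℝ), (L + ε) * |b2p - b1m| ≤ a2p - a1m := by
    apply mkRay (-1) 1
    · intro u hu
      unfold DD
      rw [mul_one, show xb + u * (-1) = xb - u by ring, F1l u hu, F2r u hu,
        show xb - u + (yb + u) = xb + yb by ring]
      linarith [hD0]
    · intro u hu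
      unfold DD
      rw [mul_one, show xb + u * (-1) = xb - u by ring, G1l u hu, G2r u hu,
        show xb - u + (yb + u) = xb + yb by ring]
      linarith [hb0]
  obtain ⟨ε1, hε1, hB1⟩ := hR1
  obtain ⟨ε2, hε2, hB2⟩ := hR2
  obtain ⟨ε3, hε3, hB3⟩ := hR3
  obtain ⟨ε4, hε4, hB4⟩ := hR4
  obtain ⟨ε5, hε5, hB5⟩ := hR5
  obtain ⟨ε6, hε6, hB6⟩ := hR6
  set ε : ℝ := min (min ε1 ε2) (min (min ε3 ε4) (min ε5 ε6)) with hεdef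
  have hεpos : 0 < ε := by
    exact lt_min (lt_min hε1 hε2) (lt_min (lt_min hε3 hε4) (lt_min hε5 hε6))
  set δ' : ℝ := δ / 2 with hδ'def
  have hδ'pos : 0 < δ' := by positivity
  have hLnn : (0:ℝ) ≤ L := by linarith
  -- local margin on the box
  have hlocal : ∀ s t : ℝ, |s| ≤ δ' → |t| ≤ δ' →
      (L + ε) * |DD πb (xb + s) (yb + t)| ≤ DD π (xb + s) (yb + t) := by
    intro s t hs ht
    have hsd : |s| ≤ δ := le_trans hs (by rw [hδ'def]; linarith)
    have htd : |t| ≤ δ := le_trans ht (by rw [hδ'def]; linarith)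
    have hstd : |s + t| ≤ δ := by
      calc |s + t| ≤ |s| + |t| := abs_add_le _ _
        _ ≤ δ' + δ' := add_le_add hs ht
        _ = δ := by rw [hδ'def]; ring
    have hmem : ∀ v : ℝ, |v| ≤ δ → 0 ≤ v → v ∈ Set.Icc (0:ℝ) δ := by
      intro v hv h0
      exact ⟨h0, by rwa [abs_of_nonneg h0] at hv⟩
    have hmem' : ∀ v : ℝ, |v| ≤ δ → v < 0 → -v ∈ Set.Icc (0:ℝ) δ := by
      intro v hv h0
      refine ⟨by linarith, ?_⟩
      rw [abs_of_neg h0] at hv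
      linarith
    have key : ∀ (c1 c2 A1 A2 B1 B2 e1 e2 : ℝ), 0 ≤ c1 → 0 ≤ c2 → 0 < e1 → 0 < e2 →
        ((L + e1) * |B1| ≤ A1) → ((L + e2) * |B2| ≤ A2) → (ε ≤ min e1 e2) →
        (DD π (xb + s) (yb + t) = c1 * A1 + c2 * A2) →
        (DD πb (xb + s) (yb + t) = c1 * B1 + c2 * B2) →
        (L + ε) * |DD πb (xb + s) (yb + t)| ≤ DD π (xb + s) (yb + t) := by
      intro c1 c2 A1 A2 B1 B2 e1 e2 hc1 hc2 he1 he2 hb1 hb2 hεle hPeq hQeq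
      have := cone_alg hLnn hc1 hc2 he1 he2 hb1 hb2 hPeq hQeq
      have hmono : (L + ε) * |DD πb (xb + s) (yb + t)| ≤ (L + min e1 e2) * |DD πb (xb + s) (yb + t)| :=
        mul_le_mul_of_nonneg_right (by linarith) (abs_nonneg _)
      linarith
    rcases le_or_gt 0 s with hs0 | hs0 <;> rcases le_or_gt 0 t with ht0 | ht0
    · -- s ≥ 0, t ≥ 0 : cone (+,+,+), rays R1 (c1 = s), R2 (c2 = t)
      have hst0 : 0 ≤ s + t := by linarith
      have hPeq : DD π (xb + s) (yb + t) = s * (a1p - a3p) + t * (a2p - a3p) := by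
        unfold DD
        rw [F1r s (hmem s hsd hs0), F2r t (hmem t htd ht0),
          show xb + s + (yb + t) = (xb + yb) + (s + t) by ring,
          F3r (s+t) (hmem _ hstd hst0)]
        linarith [hD0]
      have hQeq : DD πb (xb + s) (yb + t) = s * (b1p - b3p) + t * (b2p - b3p) := by
        unfold DD
        rw [G1r s (hmem s hsd hs0), G2r t (hmem t htd ht0),
          show xb + s + (yb + t) = (xb + yb) + (s + t) by ring,
          G3r (s+t) (hmem _ hstd hst0)]
        linarith [hb0]
      exact key s t _ _ _ _ ε1 ε2 hs0 ht0 hε1 hε2 hB1 hB2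
        (by rw [hεdef]; exact min_le_left _ _) hPeq hQeq
    · -- s ≥ 0, t < 0
      have hεle1 : ε ≤ ε1 := le_trans (min_le_left _ _) (min_le_left _ _)
      have hεle3 : ε ≤ ε3 := le_trans (min_le_right _ _)
        (le_trans (min_le_left _ _) (min_le_left _ _))
      have hεle4 : ε ≤ ε4 := le_trans (min_le_right _ _)
        (le_trans (min_le_left _ _) (min_le_right _ _))
      have hmt : -t ∈ Set.Icc (0:ℝ) δ := hmem' t htd ht0
      rcases le_or_gt 0 (s + t) with hst0 | hst0
      · have hPeq : DD π (xb + s) (yb + t) = (s+t) * (a1p - a3p) + (-t) * (a1p - a2m) := by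
          unfold DD
          rw [show yb + t = yb - (-t) by ring, F1r s (hmem s hsd hs0), F2l (-t) hmt,
            show xb + s + (yb - -t) = (xb + yb) + (s + t) by ring,
            F3r (s+t) (hmem _ hstd hst0)]
          linarith [hD0]
        have hQeq : DD πb (xb + s) (yb + t) = (s+t) * (b1p - b3p) + (-t) * (b1p - b2m) := by
          unfold DD
          rw [show yb + t = yb - (-t) by ring, G1r s (hmem s hsd hs0), G2l (-t) hmt,
            show xb + s + (yb - -t) = (xb + yb) + (s + t) by ring,
            G3r (s+t) (hmem _ hstd hst0)]
          linarith [hb0]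
        exact key (s+t) (-t) _ _ _ _ ε1 ε3 hst0 (by linarith) hε1 hε3 hB1 hB3
          (le_min hεle1 hεle3) hPeq hQeq
      · have hmst : -(s+t) ∈ Set.Icc (0:ℝ) δ := hmem' (s+t) hstd hst0
        have hPeq : DD π (xb + s) (yb + t) = s * (a1p - a2m) + (-(s+t)) * (a3m - a2m) := by
          unfold DD
          rw [show yb + t = yb - (-t) by ring, F1r s (hmem s hsd hs0), F2l (-t) hmt,
            show xb + s + (yb - -t) = (xb + yb) - (-(s + t)) by ring,
            F3l (-(s+t)) hmst]
          linarith [hD0]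
        have hQeq : DD πb (xb + s) (yb + t) = s * (b1p - b2m) + (-(s+t)) * (b3m - b2m) := by
          unfold DD
          rw [show yb + t = yb - (-t) by ring, G1r s (hmem s hsd hs0), G2l (-t) hmt,
            show xb + s + (yb - -t) = (xb + yb) - (-(s + t)) by ring,
            G3l (-(s+t)) hmst]
          linarith [hb0]
        exact key s (-(s+t)) _ _ _ _ ε3 ε4 hs0 (by linarith) hε3 hε4 hB3 hB4
          (le_min hεle3 hεle4) hPeq hQeq
    · -- s < 0, t ≥ 0
      have hεle2 : ε ≤ ε2 := le_trans (min_le_left _ _) (min_le_right _ _)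
      have hεle5 : ε ≤ ε5 := le_trans (min_le_right _ _)
        (le_trans (min_le_right _ _) (min_le_left _ _))
      have hεle6 : ε ≤ ε6 := le_trans (min_le_right _ _)
        (le_trans (min_le_right _ _) (min_le_right _ _))
      have hms : -s ∈ Set.Icc (0:ℝ) δ := hmem' s hsd hs0
      rcases le_or_gt 0 (s + t) with hst0 | hst0
      · have hPeq : DD π (xb + s) (yb + t) = (-s) * (a2p - a1m) + (s+t) * (a2p - a3p) := by
          unfold DD
          rw [show xb + s = xb - (-s) by ring, F1l (-s) hms, F2r t (hmem t htd ht0),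
            show xb - -s + (yb + t) = (xb + yb) + (s + t) by ring,
            F3r (s+t) (hmem _ hstd hst0)]
          linarith [hD0]
        have hQeq : DD πb (xb + s) (yb + t) = (-s) * (b2p - b1m) + (s+t) * (b2p - b3p) := by
          unfold DD
          rw [show xb + s = xb - (-s) by ring, G1l (-s) hms, G2r t (hmem t htd ht0),
            show xb - -s + (yb + t) = (xb + yb) + (s + t) by ring,
            G3r (s+t) (hmem _ hstd hst0)]
          linarith [hb0]
        exact key (-s) (s+t) _ _ _ _ ε6 ε2 (by linarith) hst0 hε6 hε2 hB6 hB2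
          (le_min hεle6 hεle2) hPeq hQeq
      · have hmst : -(s+t) ∈ Set.Icc (0:ℝ) δ := hmem' (s+t) hstd hst0
        have hPeq : DD π (xb + s) (yb + t) = t * (a2p - a1m) + (-(s+t)) * (a3m - a1m) := by
          unfold DD
          rw [show xb + s = xb - (-s) by ring, F1l (-s) hms, F2r t (hmem t htd ht0),
            show xb - -s + (yb + t) = (xb + yb) - (-(s + t)) by ring,
            F3l (-(s+t)) hmst]
          linarith [hD0]
        have hQeq : DD πb (xb + s) (yb + t) = t * (b2p - b1m) + (-(s+t)) * (b3m - b1m) := by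
          unfold DD
          rw [show xb + s = xb - (-s) by ring, G1l (-s) hms, G2r t (hmem t htd ht0),
            show xb - -s + (yb + t) = (xb + yb) - (-(s + t)) by ring,
            G3l (-(s+t)) hmst]
          linarith [hb0]
        exact key t (-(s+t)) _ _ _ _ ε6 ε5 ht0 (by linarith) hε6 hε5 hB6 hB5
          (le_min hεle6 hεle5) hPeq hQeq
    · -- s < 0, t < 0
      have hεle4 : ε ≤ ε4 := le_trans (min_le_right _ _)
        (le_trans (min_le_left _ _) (min_le_right _ _))
      have hεle5 : ε ≤ ε5 := le_trans (min_le_right _ _)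
        (le_trans (min_le_right _ _) (min_le_left _ _))
      have hms : -s ∈ Set.Icc (0:ℝ) δ := hmem' s hsd hs0
      have hmt : -t ∈ Set.Icc (0:ℝ) δ := hmem' t htd ht0
      have hst0 : s + t < 0 := by linarith
      have hmst : -(s+t) ∈ Set.Icc (0:ℝ) δ := hmem' (s+t) hstd hst0
      have hPeq : DD π (xb + s) (yb + t) = (-s) * (a3m - a1m) + (-t) * (a3m - a2m) := by
        unfold DD
        rw [show xb + s = xb - (-s) by ring, show yb + t = yb - (-t) by ring,
          F1l (-s) hms, F2l (-t) hmt,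
          show xb - -s + (yb - -t) = (xb + yb) - (-(s + t)) by ring,
          F3l (-(s+t)) hmst]
        linarith [hD0]
      have hQeq : DD πb (xb + s) (yb + t) = (-s) * (b3m - b1m) + (-t) * (b3m - b2m) := by
        unfold DD
        rw [show xb + s = xb - (-s) by ring, show yb + t = yb - (-t) by ring,
          G1l (-s) hms, G2l (-t) hmt,
          show xb - -s + (yb - -t) = (xb + yb) - (-(s + t)) by ring,
          G3l (-(s+t)) hmst]
        linarith [hb0]
      exact key (-s) (-t) _ _ _ _ ε5 ε4 (by linarith) (by linarith) hε5 hε4 hB5 hB4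
        (le_min hεle5 hεle4) hPeq hQeq
  obtain ⟨N₂, hN₂⟩ := exists_nat_one_div_lt hεpos
  obtain ⟨N₁, hN₁⟩ := Metric.tendsto_atTop.mp hconv δ' hδ'pos
  set n := max N₁ N₂ with hn
  have hdist := hN₁ n (le_max_left _ _)
  rw [Prod.dist_eq] at hdist
  have hd1 : |(ps (φ n)).1 - xb| ≤ δ' := by
    have : dist (ps (φ n)).1 xb < δ' := lt_of_le_of_lt (le_max_left _ _) hdist
    rw [Real.dist_eq] at this
    exact this.le
  have hd2 : |(ps (φ n)).2 - yb| ≤ δ' := by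
    have : dist (ps (φ n)).2 yb < δ' := lt_of_le_of_lt (le_max_right _ _) hdist
    rw [Real.dist_eq] at this
    exact this.le
  have hloc := hlocal ((ps (φ n)).1 - xb) ((ps (φ n)).2 - yb) hd1 hd2
  rw [show xb + ((ps (φ n)).1 - xb) = (ps (φ n)).1 by ring,
    show yb + ((ps (φ n)).2 - yb) = (ps (φ n)).2 by ring] at hloc
  have hsmall : 1/((φ n : ℝ)+1) ≤ ε := by
    have h1 : (N₂:ℝ) ≤ φ n := by
      have h2 : N₂ ≤ n := le_max_right _ _
      have h3 := le_trans h2 (hφ.le_apply)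
      exact_mod_cast h3
    have h2 : 1/((φ n:ℝ)+1) ≤ 1/((N₂:ℝ)+1) := by
      apply div_le_div_of_nonneg_left one_pos.le (by positivity)
      linarith
    linarith [hN₂, h2]
  have hviol := hpslt (φ n)
  have hmono : (L + 1/((φ n : ℝ)+1)) * |DD πb (ps (φ n)).1 (ps (φ n)).2|
      ≤ (L + ε) * |DD πb (ps (φ n)).1 (ps (φ n)).2| := by
    apply mul_le_mul_of_nonneg_right _ (abs_nonneg _)
    linarith
  linarith

lemma P_subset (hπ : MinimalValid f π) (hplus : MinimalValid f (fun x => π x + πb x))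
    (hminus : MinimalValid f (fun x => π x - πb x)) (hne : πb ≠ 0)
    (t : ℝ) (ht : |t| = sSup (Sl f π πb)) :
    Pset f π ⊆ Pset f (fun x => π x + t * πb x) := by
  obtain ⟨⟨hl0, hl1, hl2⟩, hub⟩ := lstar_mem hπ hplus hminus hne
  intro y hy
  obtain ⟨hfeas, hsum⟩ := hy
  have hsum' : SM π y = 1 := hsum
  have hdec : ∀ s : ℝ, SM (fun x => π x + s * πb x) y = SM π y + s * SM πb y := by
    intro s
    rw [SM_funadd π (fun x => s * πb x), SM_funsmul]
  have hp := (min_theta hπ hplus hminus hne (sSup (Sl f π πb))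
    (by rw [abs_of_nonneg hl0])).1.2 y hfeas
  have hm := (min_theta hπ hplus hminus hne (-sSup (Sl f π πb))
    (by rw [abs_neg, abs_of_nonneg hl0])).1.2 y hfeas
  have hp' : 1 ≤ SM (fun x => π x + sSup (Sl f π πb) * πb x) y := hp
  have hm' : 1 ≤ SM (fun x => π x + (-sSup (Sl f π πb)) * πb x) y := hm
  rw [hdec, hsum'] at hp' hm'
  have hL0 : 0 < sSup (Sl f π πb) := by linarith
  have hb0 : SM πb y = 0 := by
    have h1 : 0 ≤ sSup (Sl f π πb) * SM πb y := by linarith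
    have h2 : 0 ≤ -(sSup (Sl f π πb) * SM πb y) := by
      have := hm'
      nlinarith
    have h3 : sSup (Sl f π πb) * SM πb y = 0 := by linarith
    rcases mul_eq_zero.mp h3 with h | h
    · linarith
    · exact h
  refine ⟨hfeas, ?_⟩
  show SM (fun x => π x + t * πb x) y = 1
  rw [hdec, hsum', hb0, mul_zero, add_zero]

lemma main_ex (hπ : MinimalValid f π) (hplus : MinimalValid f (fun x => π x + πb x))
    (hminus : MinimalValid f (fun x => π x - πb x)) (hne : πb ≠ 0)
    (hcpl : ContPiecewiseLinear π) (hcplb : ContPiecewiseLinear πb) :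
    ∃ θ : ℝ → ℝ, MinimalValid f θ ∧ (∀ x, θ x + θ (f - x) = 1) ∧
      Pset f π ⊆ Pset f θ ∧ Eset π ⊆ Eset θ ∧ Eset π ≠ Eset θ := by
  obtain ⟨⟨hl0, hl1, hl2⟩, hub⟩ := lstar_mem hπ hplus hminus hne
  set L := sSup (Sl f π πb) with hLdef
  have habsL : |L| = L := abs_of_nonneg hl0
  have habsmL : |(-L)| = L := by rw [abs_neg, habsL]
  by_cases hEp : Eset (fun x => π x + L * πb x) = Eset π
  · by_cases hEm : Eset (fun x => π x + (-L) * πb x) = Eset π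
    · exfalso
      obtain ⟨ε1, hε1, hm1⟩ := margin1 hπ hplus hminus hne hcpl hcplb hEp hEm
      obtain ⟨ε2, hε2, hm2⟩ := margin2 hπ hplus hminus hne hcpl hcplb hEp hEm
      set ε := min ε1 ε2 with hεdef
      have hεpos : 0 < ε := lt_min hε1 hε2
      have hmem : L + ε ∈ Sl f π πb := by
        refine ⟨by linarith, ?_, ?_⟩
        · intro x
          have h1 := hm1 x
          have : (L + ε) * |πb x| ≤ (L + ε1) * |πb x| :=
            mul_le_mul_of_nonneg_right (by linarith [min_le_left ε1 ε2]) (abs_nonneg _)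
          linarith
        · intro x y
          have h1 := hm2 x y
          have : (L + ε) * |DD πb x y| ≤ (L + ε2) * |DD πb x y| :=
            mul_le_mul_of_nonneg_right (by linarith [min_le_right ε1 ε2]) (abs_nonneg _)
          linarith
      have hbdd : BddAbove (Sl f π πb) := S_bddAbove hπ hne
      have hfin : L + ε ≤ sSup (Sl f π πb) := le_csSup hbdd hmem
      rw [← hLdef] at hfin
      linarith
    · refine ⟨fun x => π x + (-L) * πb x,
        min_theta hπ hplus hminus hne (-L) (le_of_eq habsmL), ?_, ?_, ?_, ?_⟩
      · exact piSymEq (min_theta hπ hplus hminus hne (-L) (le_of_eq habsmL))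
      · exact P_subset hπ hplus hminus hne (-L) habsmL
      · exact E_subset hπ hplus hminus hne (-L) (le_of_eq habsmL)
      · exact fun h => hEm h.symm
  · refine ⟨fun x => π x + L * πb x,
      min_theta hπ hplus hminus hne L (le_of_eq habsL), ?_, ?_, ?_, ?_⟩
    · exact piSymEq (min_theta hπ hplus hminus hne L (le_of_eq habsL))
    · exact P_subset hπ hplus hminus hne L habsL
    · exact E_subset hπ hplus hminus hne L (le_of_eq habsL)
    · exact fun h => hEp h.symm


theorem stmt15 (f : ℝ) (hf : f ∈ Set.Ioo (0 : ℝ) 1) (π : ℝ → ℝ)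
    (hπ : MinimalValid f π) (hcpl : ContPiecewiseLinear π)
    (πb : ℝ → ℝ) (hcplb : ContPiecewiseLinear πb) (hne : πb ≠ 0)
    (hplus : MinimalValid f (fun x => π x + πb x))
    (hminus : MinimalValid f (fun x => π x - πb x)) :
    (∃ π' : ℝ → ℝ, MinimalValid f π' ∧ Eset π ⊂ Eset π') ∧ ¬ IsWeakFacet f π := by
  obtain ⟨θ, hmθ, hsymθ, hPsub, hEsub, hEne⟩ := main_ex hπ hplus hminus hne hcpl hcplb
  have hss : Eset π ⊂ Eset θ := ⟨hEsub, fun h => hEne (Set.Subset.antisymm hEsub h)⟩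
  refine ⟨⟨θ, hmθ, hss⟩, ?_⟩
  rintro ⟨hval, hW⟩
  have hPeq := hW θ hmθ.1 hPsub
  obtain ⟨p, hpθ, hpπ⟩ := Set.exists_of_ssubset hss
  obtain ⟨u, v⟩ := p
  set z : ℝ →₀ ℕ := Finsupp.single u 1 + (Finsupp.single v 1 + Finsupp.single (f - u - v) 1)
    with hzdef
  have hfeas : Feasible f z := by
    rw [Feas_iff]
    refine ⟨0, ?_⟩
    rw [hzdef, SM_add, SM_add, SM_single', SM_single', SM_single']
    push_cast; ring
  have hSMθ : SM θ z = θ u + θ v + θ (f - u - v) := by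
    rw [hzdef, SM_add, SM_add, SM_single, SM_single, SM_single]
    push_cast; ring
  have huv : θ u + θ v = θ (u + v) := hpθ
  have hθz : SM θ z = 1 := by
    rw [hSMθ, huv, show f - u - v = f - (u + v) by ring]
    exact hsymθ (u + v)
  have hzP : z ∈ Pset f θ := ⟨hfeas, hθz⟩
  rw [← hPeq] at hzP
  obtain ⟨_, hπz⟩ := hzP
  have hπz' : SM π z = 1 := hπz
  have hSMπ : SM π z = π u + π v + π (f - u - v) := by
    rw [hzdef, SM_add, SM_add, SM_single, SM_single, SM_single]
    push_cast; ring
  have hsymπ := piSymEq hπ (u + v)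
  have : π u + π v = π (u + v) := by
    rw [hSMπ, show f - u - v = f - (u + v) by ring] at hπz'
    linarith
  exact hpπ this
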